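/- Let V be a finite-dimensional real inner product space, S ⊆ V a subspace, and R : ℝ → (V →ₗ V) a continuous family of linear operators such that R(t) maps S into S and the orthogonal complement S⊥ into S⊥ for every t. If Y : ℝ → V satisfies the second-order linear ODE Y''(t) + R(t) Y(t) = 0 with Y(0) ∈ S and Y'(0) ∈ S, then Y(t) ∈ S for all t. -/

import Mathlib

open Set Real NNReal

theorem stmt8 (V : Type*) [NormedAddCommGroup V] [InnerProductSpace ℝ V]
    [FiniteDimensional ℝ V]
    (S : Submodule ℝ V) (R : ℝ → V →ₗ[ℝ] V)
    (hRcont : ∀ v : V, Continuous fun t => R t v)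
    (hRS : ∀ t : ℝ, ∀ v ∈ S, R t v ∈ S)
    (hRSperp : ∀ t : ℝ, ∀ v ∈ Sᗮ, R t v ∈ Sᗮ)
    (Y Y' : ℝ → V)
    (hY : ∀ t, HasDerivAt Y (Y' t) t)
    (hY' : ∀ t, HasDerivAt Y' (-(R t (Y t))) t)
    (h0 : Y 0 ∈ S) (h0' : Y' 0 ∈ S) :
    ∀ t : ℝ, Y t ∈ S := by
  haveI : CompleteSpace V := FiniteDimensional.complete ℝ V
  -- P : orthogonal projection onto Sᗮ, viewed as a map V → V
  set P : V →L[ℝ] V := (Sᗮ).subtypeL.comp (Submodule.orthogonalProjectionOnto Sᗮ) with hP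
  have hPmem : ∀ v : V, P v ∈ Sᗮ := fun v => ((Submodule.orthogonalProjectionOnto Sᗮ) v).2
  have hPzeroS : ∀ v ∈ S, P v = 0 := by
    intro v hv
    have : v ∈ (Sᗮ)ᗮ := (Submodule.le_orthogonal_orthogonal S) hv
    have : Submodule.orthogonalProjectionOnto Sᗮ v = 0 := Submodule.orthogonalProjectionOnto_eq_zero_iff.mpr (by simpa using this)
    simp [hP, this]
  have hPid : ∀ v ∈ Sᗮ, P v = v := by
    intro v hv
    simp [hP, Submodule.starProjection_eq_self_iff.mpr hv]
  -- P commutes with R t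
  have hcomm : ∀ t (v : V), P (R t v) = R t (P v) := by
    intro t v
    have hsub : v - P v ∈ S := by
      have := Submodule.sub_starProjection_mem_orthogonal (K := Sᗮ) v
      rwa [Submodule.orthogonal_orthogonal] at this
    have h1 : R t v = R t (v - P v) + R t (P v) := by
      rw [← map_add]; congr 1; abel
    rw [h1, map_add, hPzeroS _ (hRS t _ hsub), hPid _ (hRSperp t _ (hPmem v)), zero_add]
  -- Z, Z' : projections of Y, Y'
  set Z : ℝ → V := fun t => P (Y t) with hZ
  set Z' : ℝ → V := fun t => P (Y' t) with hZ'
  have hZd : ∀ t, HasDerivAt Z (Z' t) t := fun t =>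
    (P.hasFDerivAt.comp_hasDerivAt t (hY t))
  have hZ'd : ∀ t, HasDerivAt Z' (-(R t (Z t))) t := by
    intro t
    have := P.hasFDerivAt.comp_hasDerivAt t (hY' t)
    simp only [map_neg, hcomm] at this; exact this
  -- R as continuous family of continuous linear maps
  set φ : ℝ → V →L[ℝ] V := fun t => LinearMap.toContinuousLinearMap (R t) with hφ
  have hφcont : Continuous φ := continuous_clm_apply.mpr (by simpa [hφ] using hRcont)
  -- main claim: Z t = 0 for all t
  suffices hZ0 : ∀ t, Z t = 0 by
    intro t
    have hsub : Y t - P (Y t) ∈ S := by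
      have := Submodule.sub_starProjection_mem_orthogonal (K := Sᗮ) (Y t)
      rwa [Submodule.orthogonal_orthogonal] at this
    have := hZ0 t
    simp only [hZ] at this
    rw [this, sub_zero] at hsub
    exact hsub
  intro t₁
  -- work on the interval [a, b]
  set a : ℝ := -(|t₁| + 1) with ha
  set b : ℝ := |t₁| + 1 with hb
  have habs : (0:ℝ) ≤ |t₁| := abs_nonneg _
  have hab : a < b := by simp [ha, hb]; linarith
  have ht₁ : t₁ ∈ Icc a b := by
    constructor
    · rw [ha]; have := neg_abs_le t₁; linarith
    · rw [hb]; have := le_abs_self t₁; linarith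
  have h0mem : (0:ℝ) ∈ Ioo a b := by constructor <;> [skip; skip] <;> simp [ha, hb] <;> linarith
  -- clip time into [a,b]
  set τ : ℝ → ℝ := fun t => max a (min t b) with hτ
  have hτmem : ∀ t, τ t ∈ Icc a b := by
    intro t
    refine ⟨le_max_left _ _, max_le hab.le (min_le_right _ _)⟩
  have hτid : ∀ t ∈ Ioo a b, τ t = t := by
    intro t ht
    rw [hτ]
    simp only [min_eq_left ht.2.le, max_eq_right ht.1.le]
  -- uniform bound for ‖φ (τ t)‖
  obtain ⟨C, hC⟩ : ∃ C : ℝ, ∀ t ∈ Icc a b, ‖φ t‖ ≤ C := by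
    obtain ⟨C, hC⟩ := (isCompact_Icc (a := a) (b := b)).exists_bound_of_continuousOn
      (hφcont.continuousOn)
    exact ⟨C, hC⟩
  have hCnn : (0:ℝ) ≤ C := le_trans (norm_nonneg _) (hC a ⟨le_rfl, hab.le⟩)
  set K : ℝ≥0 := max 1 C.toNNReal with hK
  -- the first-order vector field with clipped time
  set F : ℝ → V × V → V × V := fun t w => (w.2, -(φ (τ t) w.1)) with hF
  have hFlip : ∀ t, LipschitzWith K (F t) := by
    intro t
    have h1 : LipschitzWith 1 (fun w : V × V => w.2) := LipschitzWith.prod_snd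
    have h2 : LipschitzWith (‖φ (τ t)‖₊) (fun w : V × V => φ (τ t) w.1) := by
      simpa [Function.comp_def] using (φ (τ t)).lipschitz.comp (LipschitzWith.prod_fst : LipschitzWith 1 (Prod.fst : V × V → V))
    have h2' : LipschitzWith (‖φ (τ t)‖₊) (fun w : V × V => -(φ (τ t) w.1)) := h2.neg
    have hb1 : (1 : ℝ≥0) ≤ K := le_max_left _ _
    have hb2 : ‖φ (τ t)‖₊ ≤ K := by
      refine le_trans ?_ (le_max_right 1 C.toNNReal)
      rw [← NNReal.coe_le_coe]
      simpa [Real.coe_toNNReal _ hCnn] using hC (τ t) (hτmem t)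
    have := (h1.weaken hb1).prodMk (h2'.weaken hb2)
    simpa [hF, max_self] using this
  -- apply uniqueness of ODE solutions against the zero solution
  have huniq := ODE_solution_unique_of_mem_Icc (K := K) (v := F)
    (s := fun _ => (univ : Set (V × V))) (f := fun t => (Z t, Z' t))
    (g := fun _ => (0 : V × V)) (t₀ := (0:ℝ)) (a := a) (b := b)
    (fun t _ => (hFlip t).lipschitzOnWith) h0mem
    (fun t _ => ((hZd t).prodMk (hZ'd t)).continuousAt.continuousWithinAt)
    (fun t ht => by
      have := (hZd t).prodMk (hZ'd t)
      have heq : F t (Z t, Z' t) = (Z' t, -(R t (Z t))) := by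
        simp [hF, hτid t ht, hφ]
      rw [heq]
      exact this)
    (fun _ _ => mem_univ _)
    (continuousOn_const)
    (fun t ht => by
      have heq : F t (0 : V × V) = 0 := by simp [hF]
      rw [heq]
      exact hasDerivAt_const t 0)
    (fun _ _ => mem_univ _)
    (by
      have hz1 : Z 0 = 0 := hPzeroS _ h0
      have hz2 : Z' 0 = 0 := hPzeroS _ h0'
      simp [hz1, hz2])
  have := huniq ht₁
  exact congrArg Prod.fst this
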